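/- Consider the block system M = [[A_a, Σ, Σ, 0], [−Σᵀ, K, 0, 0], [−Σᵀ, 0, K, −Σᵀ], [0, 0, Σ, 0]] where A_a is symmetric positive definite, K is symmetric positive definite, and Σ has full rank in the appropriate sense (the (4,3) block Σ is surjective). If the upper-left 3×3 block system (acting on (p_a, λ_{aa}, λ_{ab})) is invertible with a coercive symmetric part, then M is invertible. -/

import Mathlib

open Matrix

/-- The 4×4 block system
`M = [[A_a, Σ, Σ, 0], [−Σᵀ, K, 0, 0], [−Σᵀ, 0, K, −Σ₂ᵀ], [0, 0, Σ₂, 0]]`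
with `A_a` symmetric positive definite, `K` symmetric positive definite, the (4,3) block
`Σ₂` surjective, and the upper-left 3×3 block invertible with coercive symmetric part,
is invertible. -/
theorem stmt7 {n m k : ℕ} (Aa : Matrix (Fin n) (Fin n) ℝ) (S1 : Matrix (Fin n) (Fin m) ℝ)
    (K : Matrix (Fin m) (Fin m) ℝ) (S2 : Matrix (Fin k) (Fin m) ℝ) (α : ℝ) (hα : 0 < α)
    (hAsym : Aaᵀ = Aa) (hApd : ∀ x : Fin n → ℝ, x ≠ 0 → 0 < x ⬝ᵥ (Aa *ᵥ x))
    (hKsym : Kᵀ = K) (hKpd : ∀ x : Fin m → ℝ, x ≠ 0 → 0 < x ⬝ᵥ (K *ᵥ x))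
    (hS2 : ∀ y : Fin k → ℝ, ∃ x : Fin m → ℝ, S2 *ᵥ x = y)
    (hTunit : IsUnit (Matrix.fromBlocks (Matrix.fromBlocks Aa S1 (-S1ᵀ) K)
      (Matrix.fromRows S1 (0 : Matrix (Fin m) (Fin m) ℝ))
      (Matrix.fromCols (-S1ᵀ) (0 : Matrix (Fin m) (Fin m) ℝ)) K))
    (hTcoer : ∀ x : (Fin n ⊕ Fin m) ⊕ Fin m → ℝ,
      α * (x ⬝ᵥ x) ≤ x ⬝ᵥ ((Matrix.fromBlocks (Matrix.fromBlocks Aa S1 (-S1ᵀ) K)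
        (Matrix.fromRows S1 (0 : Matrix (Fin m) (Fin m) ℝ))
        (Matrix.fromCols (-S1ᵀ) (0 : Matrix (Fin m) (Fin m) ℝ)) K) *ᵥ x)) :
    IsUnit (Matrix.fromBlocks (Matrix.fromBlocks Aa S1 (-S1ᵀ) K)
      (Matrix.fromBlocks S1 0 0 0)
      (Matrix.fromBlocks (-S1ᵀ) 0 0 0)
      (Matrix.fromBlocks K (-S2ᵀ) S2 0)) := by
  rw [Matrix.isUnit_iff_isUnit_det, isUnit_iff_ne_zero]
  intro hdet
  obtain ⟨v, hv, hMv⟩ := (Matrix.exists_mulVec_eq_zero_iff).2 hdet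
  set p : Fin n → ℝ := fun i => v (Sum.inl (Sum.inl i)) with hp
  set a : Fin m → ℝ := fun i => v (Sum.inl (Sum.inr i)) with ha
  set b : Fin m → ℝ := fun i => v (Sum.inr (Sum.inl i)) with hb
  set μ : Fin k → ℝ := fun i => v (Sum.inr (Sum.inr i)) with hμ
  have hv' : v = Sum.elim (Sum.elim p a) (Sum.elim b μ) := by
    funext i; rcases i with (i|i)|(i|i) <;> rfl
  rw [hv'] at hMv
  rw [Matrix.fromBlocks_mulVec] at hMv
  rw [Matrix.fromBlocks_mulVec, Matrix.fromBlocks_mulVec,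
    Matrix.fromBlocks_mulVec, Matrix.fromBlocks_mulVec] at hMv
  -- extract equations
  have e1 : Aa *ᵥ p + S1 *ᵥ a + S1 *ᵥ b = 0 := by
    funext i
    have := congrFun hMv (Sum.inl (Sum.inl i))
    simpa [Pi.add_apply] using this
  have e2 : (-S1ᵀ) *ᵥ p + K *ᵥ a = 0 := by
    funext i
    have := congrFun hMv (Sum.inl (Sum.inr i))
    simpa using this
  have e3 : (-S1ᵀ) *ᵥ p + K *ᵥ b + (-S2ᵀ) *ᵥ μ = 0 := by
    funext i
    have := congrFun hMv (Sum.inr (Sum.inl i))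
    simpa [add_assoc] using this
  have e4 : S2 *ᵥ b = 0 := by
    funext i
    have := congrFun hMv (Sum.inr (Sum.inr i))
    simpa using this
  -- symmetric part identity
  have key : p ⬝ᵥ (Aa *ᵥ p) + a ⬝ᵥ (K *ᵥ a) + b ⬝ᵥ (K *ᵥ b) = 0 := by
    have h1 := congrArg (fun w => p ⬝ᵥ w) e1
    have h2 := congrArg (fun w => a ⬝ᵥ w) e2
    have h3 := congrArg (fun w => b ⬝ᵥ w) e3
    have h4 := congrArg (fun w => μ ⬝ᵥ w) e4
    simp only [dotProduct_add, dotProduct_zero] at h1 h2 h3 h4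
    have c1 : a ⬝ᵥ ((-S1ᵀ) *ᵥ p) = -(p ⬝ᵥ (S1 *ᵥ a)) := by
      rw [Matrix.neg_mulVec, dotProduct_neg, Matrix.mulVec_transpose,
        Matrix.dotProduct_mulVec]
      exact congrArg Neg.neg (dotProduct_comm _ _)
    have c2 : b ⬝ᵥ ((-S1ᵀ) *ᵥ p) = -(p ⬝ᵥ (S1 *ᵥ b)) := by
      rw [Matrix.neg_mulVec, dotProduct_neg, Matrix.mulVec_transpose,
        Matrix.dotProduct_mulVec]
      exact congrArg Neg.neg (dotProduct_comm _ _)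
    have c3 : b ⬝ᵥ ((-S2ᵀ) *ᵥ μ) = -(μ ⬝ᵥ (S2 *ᵥ b)) := by
      rw [Matrix.neg_mulVec, dotProduct_neg, Matrix.mulVec_transpose,
        Matrix.dotProduct_mulVec]
      exact congrArg Neg.neg (dotProduct_comm _ _)
    rw [c1] at h2
    rw [c2, c3, h4] at h3
    linarith
  have nn : ∀ (N : Matrix (Fin m) (Fin m) ℝ), (∀ x : Fin m → ℝ, x ≠ 0 → 0 < x ⬝ᵥ (N *ᵥ x)) →
      ∀ x, 0 ≤ x ⬝ᵥ (N *ᵥ x) := by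
    intro N hN x
    by_cases hx : x = 0
    · simp [hx]
    · exact le_of_lt (hN x hx)
  have nnA : 0 ≤ p ⬝ᵥ (Aa *ᵥ p) := by
    by_cases hx : p = 0
    · simp [hx]
    · exact le_of_lt (hApd p hx)
  have nna := nn K hKpd a
  have nnb := nn K hKpd b
  have hp0 : p = 0 := by
    by_contra h
    have := hApd p h
    linarith
  have ha0 : a = 0 := by
    by_contra h
    have := hKpd a h
    linarith
  have hb0 : b = 0 := by
    by_contra h
    have := hKpd b h
    linarith
  -- from e3 : S2ᵀ μ = 0
  have hS2t : S2ᵀ *ᵥ μ = 0 := by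
    have := e3
    rw [hp0, hb0] at this
    simp only [Matrix.mulVec_zero, zero_add, add_zero, Matrix.neg_mulVec] at this
    exact neg_eq_zero.mp this
  have hμ0 : μ = 0 := by
    obtain ⟨x, hx⟩ := hS2 μ
    have : μ ⬝ᵥ μ = 0 := by
      calc μ ⬝ᵥ μ = μ ⬝ᵥ (S2 *ᵥ x) := by rw [hx]
        _ = (S2ᵀ *ᵥ μ) ⬝ᵥ x := by
            rw [Matrix.dotProduct_mulVec, Matrix.mulVec_transpose]
        _ = 0 := by rw [hS2t]; simp
    exact (dotProduct_self_eq_zero).mp this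
  apply hv
  rw [hv', hp0, ha0, hb0, hμ0]
  funext i; rcases i with (i|i)|(i|i) <;> rfl
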